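/- Rough cost estimate from random simplifications: let (X,ρ) be a metric space, let T = {τ₁,…,τₙ} be a set of n point sequences over X, each of complexity at most m, let p ∈ [1,∞), let 2 ≤ ℓ ≤ m, and let δ ∈ (0,1). Let S be a multiset of ⌈log₂(2/δ)⌉ point sequences sampled from T uniformly and independently at random with replacement, and for each τ ∈ S let τ' be a fixed (2,ℓ)-simplification of τ under dtw_p. Let c be a point sequence attaining min_{c' ∈ X^{≤ℓ}} cost_p^1(T,c'). Then with probability at least 1−δ/2, min_{τ ∈ S} cost_p^1(T, τ') ≤ 8 · m^{1/p} · ℓ^{1/p} · cost_p^1(T,c). -/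

import Mathlib

open scoped BigOperators

/-- An `(m₁, m₂)`-warping (with 0-based indices): a sequence of index pairs starting at
`(0,0)`, ending at `(m₁-1, m₂-1)`, whose consecutive increments lie in
`{(0,1), (1,0), (1,1)}`. -/
def IsWarping (m₁ m₂ : ℕ) (W : List (ℕ × ℕ)) : Prop :=
  W ≠ [] ∧ W.head? = some (0, 0) ∧ W.getLast? = some (m₁ - 1, m₂ - 1) ∧
    ∀ k, k + 1 < W.length →
      W.getD (k + 1) (0, 0) = ((W.getD k (0, 0)).1, (W.getD k (0, 0)).2 + 1) ∨
      W.getD (k + 1) (0, 0) = ((W.getD k (0, 0)).1 + 1, (W.getD k (0, 0)).2) ∨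
      W.getD (k + 1) (0, 0) = ((W.getD k (0, 0)).1 + 1, (W.getD k (0, 0)).2 + 1)

/-- The cost `Σ_{(i,j) ∈ W} ρ(σ_i, τ_j)^p` of a warping `W`. -/
noncomputable def warpCost {X : Type*} [MetricSpace X] [Inhabited X]
    (p : ℝ) (σ τ : List X) (W : List (ℕ × ℕ)) : ℝ :=
  (W.map fun ij => dist (σ.getD ij.1 default) (τ.getD ij.2 default) ^ p).sum

/-- The `p`-dynamic time warping distance between two point sequences. -/
noncomputable def dtw {X : Type*} [MetricSpace X] [Inhabited X] (p : ℝ) (σ τ : List X) : ℝ :=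
  sInf { c : ℝ | ∃ W, IsWarping σ.length τ.length W ∧ c = warpCost p σ τ W ^ (1 / p) }

/-- `cost_p^q(T, c) = Σ_{τ ∈ T} dtw_p(c, τ)^q`. -/
noncomputable def dtwCost {X : Type*} [MetricSpace X] [Inhabited X]
    (p q : ℝ) (T : Finset (List X)) (c : List X) : ℝ :=
  ∑ τ ∈ T, dtw p c τ ^ q

/-- `σ` is a point sequence of complexity at most `ℓ`, i.e. `σ ∈ X^{≤ℓ}`. -/
def SeqLE {X : Type*} (ℓ : ℕ) (σ : List X) : Prop := 2 ≤ σ.length ∧ σ.length ≤ ℓ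

namespace DTWAux

def Step (a b : ℕ × ℕ) : Prop :=
  b = (a.1, a.2 + 1) ∨ b = (a.1 + 1, a.2) ∨ b = (a.1 + 1, a.2 + 1)

def Wk (a b : ℕ × ℕ) : Prop := a = b ∨ Step a b

theorem Step.fst_le {a b : ℕ × ℕ} (h : Step a b) : a.1 ≤ b.1 := by
  rcases h with h | h | h <;> subst h <;> simp

theorem Step.snd_le {a b : ℕ × ℕ} (h : Step a b) : a.2 ≤ b.2 := by
  rcases h with h | h | h <;> subst h <;> simp

theorem isWarping_iff {m₁ m₂ : ℕ} {W : List (ℕ × ℕ)} :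
    IsWarping m₁ m₂ W ↔ W ≠ [] ∧ W.head? = some (0, 0) ∧
      W.getLast? = some (m₁ - 1, m₂ - 1) ∧ List.IsChain Step W := by
  unfold IsWarping
  refine and_congr_right fun _ => and_congr_right fun _ => and_congr_right fun _ => ?_
  rw [List.isChain_iff_getElem]
  constructor
  · intro h i hi
    have hi' : i + 1 < W.length := by omega
    have := h i hi'
    rwa [List.getD_eq_getElem _ _ hi', List.getD_eq_getElem _ _ (by omega)] at this
  · intro h k hk
    have := h k (by omega)
    rw [List.getD_eq_getElem _ _ hk, List.getD_eq_getElem _ _ (by omega)]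
    simpa [Step] using this

/-- every element is coordinatewise below the last element of a `Step` chain. -/
theorem chain_le_getLast : ∀ (l : List (ℕ × ℕ)), List.IsChain Step l → ∀ (hne : l ≠ [])
    (e : ℕ × ℕ), e ∈ l → e.1 ≤ (l.getLast hne).1 ∧ e.2 ≤ (l.getLast hne).2 := by
  intro l
  induction l with
  | nil => intro _ hne; simp at hne
  | cons a l ih =>
    intro h hne e he
    by_cases hlne : l = []
    · subst hlne
      simp only [List.mem_singleton] at he
      subst he; simp
    · have hch : List.IsChain Step l := h.tail
      rw [List.getLast_cons hlne]
      rcases List.mem_cons.mp he with rfl | he'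
      · have hhd : Step e (l.head hlne) :=
          (List.isChain_cons.mp h).1 _ (by simp [List.head?_eq_head hlne])
        have h2 := ih hch hlne (l.head hlne) (List.head_mem hlne)
        exact ⟨le_trans hhd.fst_le h2.1, le_trans hhd.snd_le h2.2⟩
      · exact ih hch hlne e he'

/-- the head of a `Step` chain is coordinatewise below every element. -/
theorem head_le_chain {l : List (ℕ × ℕ)} (h : List.IsChain Step l) (hne : l ≠ [])
    {e : ℕ × ℕ} (he : e ∈ l) :
    (l.head hne).1 ≤ e.1 ∧ (l.head hne).2 ≤ e.2 := by
  induction l with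
  | nil => simp at he
  | cons a l ih =>
    simp only [List.head_cons]
    rcases List.mem_cons.mp he with rfl | he'
    · simp
    · have hlne : l ≠ [] := List.ne_nil_of_mem he'
      have hhd : Step a (l.head hlne) :=
        (List.isChain_cons.mp h).1 _ (by simp [List.head?_eq_head hlne])
      have := ih h.tail hlne he'
      exact ⟨le_trans hhd.fst_le (this.1), le_trans hhd.snd_le (this.2)⟩

/-- if all first components are constant, a `Step` chain increments the second by 1 each step. -/
theorem chain_const_fst {l : List (ℕ × ℕ)} (h : List.IsChain Step l) (hne : l ≠ [])
    (hc : ∀ e ∈ l, e.1 = (l.head hne).1) :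
    (l.getLast hne).2 = (l.head hne).2 + (l.length - 1) := by
  induction l with
  | nil => simp at hne
  | cons a l ih =>
    by_cases hlne : l = []
    · subst hlne; simp
    · have hhd : Step a (l.head hlne) :=
        (List.isChain_cons.mp h).1 _ (by simp [List.head?_eq_head hlne])
      have hconst : ∀ e ∈ l, e.1 = (l.head hlne).1 := by
        intro e he
        have h1 := hc e (List.mem_cons_of_mem _ he)
        have h2 := hc (l.head hlne) (List.mem_cons_of_mem _ (List.head_mem hlne))
        simp only [List.head_cons] at h1 h2; omega
      have hih := ih h.tail hlne hconst
      have hfst : (l.head hlne).1 = a.1 := by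
        have := hc (l.head hlne) (List.mem_cons_of_mem _ (List.head_mem hlne))
        simpa using this
      have hstep : (l.head hlne).2 = a.2 + 1 := by
        rcases hhd with h' | h' | h' <;> rw [h'] at hfst ⊢ <;> simp at hfst ⊢
      rw [List.getLast_cons hlne, hih, hstep]
      have : l.length ≠ 0 := by simpa using hlne
      simp only [List.head_cons, List.length_cons]
      omega

/-- if all second components are constant, a `Step` chain increments the first by 1 each step. -/
theorem chain_const_snd {l : List (ℕ × ℕ)} (h : List.IsChain Step l) (hne : l ≠ [])
    (hc : ∀ e ∈ l, e.2 = (l.head hne).2) :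
    (l.getLast hne).1 = (l.head hne).1 + (l.length - 1) := by
  induction l with
  | nil => simp at hne
  | cons a l ih =>
    by_cases hlne : l = []
    · subst hlne; simp
    · have hhd : Step a (l.head hlne) :=
        (List.isChain_cons.mp h).1 _ (by simp [List.head?_eq_head hlne])
      have hconst : ∀ e ∈ l, e.2 = (l.head hlne).2 := by
        intro e he
        have h1 := hc e (List.mem_cons_of_mem _ he)
        have h2 := hc (l.head hlne) (List.mem_cons_of_mem _ (List.head_mem hlne))
        simp only [List.head_cons] at h1 h2; omega
      have hih := ih h.tail hlne hconst
      have hsnd : (l.head hlne).2 = a.2 := by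
        have := hc (l.head hlne) (List.mem_cons_of_mem _ (List.head_mem hlne))
        simpa using this
      have hstep : (l.head hlne).1 = a.1 + 1 := by
        rcases hhd with h' | h' | h' <;> rw [h'] at hsnd ⊢ <;> simp at hsnd ⊢
      rw [List.getLast_cons hlne, hih, hstep]
      have : l.length ≠ 0 := by simpa using hlne
      simp only [List.head_cons, List.length_cons]
      omega

/-- remove consecutive duplicates. -/
def dd : List (ℕ × ℕ) → List (ℕ × ℕ)
  | [] => []
  | [a] => [a]
  | a :: b :: l => if a = b then dd (b :: l) else a :: dd (b :: l)

theorem dd_sublist : ∀ l : List (ℕ × ℕ), (dd l).Sublist l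
  | [] => List.Sublist.refl _
  | [a] => List.Sublist.refl _
  | a :: b :: l => by
    rw [dd]
    split
    · exact (dd_sublist (b :: l)).cons _
    · exact (dd_sublist (b :: l)).cons₂ _

theorem dd_ne_nil : ∀ l : List (ℕ × ℕ), l ≠ [] → dd l ≠ []
  | [], h => absurd rfl h
  | [a], _ => by simp [dd]
  | a :: b :: l, _ => by
    rw [dd]
    split
    · exact dd_ne_nil (b :: l) (by simp)
    · simp

theorem dd_head? : ∀ l : List (ℕ × ℕ), (dd l).head? = l.head?
  | [] => rfl
  | [a] => rfl
  | a :: b :: l => by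
    rw [dd]
    split
    · rename_i h
      rw [dd_head? (b :: l)]; simp [h]
    · simp

theorem dd_getLast? : ∀ l : List (ℕ × ℕ), (dd l).getLast? = l.getLast?
  | [] => rfl
  | [a] => rfl
  | a :: b :: l => by
    rw [dd]
    split
    · rw [dd_getLast? (b :: l)]
      exact (List.getLast?_cons_cons).symm
    · have h2 := dd_getLast? (b :: l)
      have h3 : dd (b :: l) ≠ [] := dd_ne_nil _ (by simp)
      rcases List.exists_cons_of_ne_nil h3 with ⟨c, t, hct⟩
      rw [hct, List.getLast?_cons_cons]
      rw [hct] at h2; rw [h2]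
      exact (List.getLast?_cons_cons).symm

theorem dd_chain : ∀ l : List (ℕ × ℕ), List.IsChain Wk l → List.IsChain Step (dd l)
  | [] => fun _ => by simp [dd]
  | [a] => fun _ => by simp [dd]
  | a :: b :: l => by
    intro h
    have hhd : Wk a b := (List.isChain_cons_cons.mp h).1
    have htl : List.IsChain Wk (b :: l) := (List.isChain_cons_cons.mp h).2
    rw [dd]
    split
    · exact dd_chain (b :: l) htl
    · rename_i hne
      rw [List.isChain_cons]
      refine ⟨?_, dd_chain (b :: l) htl⟩
      intro y hy
      rw [dd_head? (b :: l)] at hy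
      simp only [List.head?_cons, Option.mem_def, Option.some.injEq] at hy
      subst hy
      rcases hhd with h' | h'
      · exact absurd h' hne
      · exact h'

/-- existence of a chain from (0,0) to any (a, b). -/
theorem exists_chain_to (a b : ℕ) :
    ∃ W : List (ℕ × ℕ), W ≠ [] ∧ W.head? = some (0, 0) ∧
      W.getLast? = some (a, b) ∧ List.IsChain Step W := by
  induction a with
  | zero =>
    induction b with
    | zero => exact ⟨[(0, 0)], by simp⟩
    | succ b ihb =>
      obtain ⟨W, hne, hh, hl, hc⟩ := ihb
      refine ⟨W ++ [(0, b + 1)], by simp, ?_, by simp, ?_⟩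
      · rcases List.exists_cons_of_ne_nil hne with ⟨c, t, rfl⟩
        simpa using hh
      · rw [List.isChain_append]
        refine ⟨hc, by simp, ?_⟩
        intro x hx y hy
        simp only [List.head?_cons, Option.mem_def, Option.some.injEq] at hy
        rw [List.getLast?_eq_getLast hne] at hx hl
        simp only [Option.mem_def, Option.some.injEq] at hx hl
        subst hy; rw [← hx, hl]
        exact Or.inl rfl
  | succ a iha =>
    obtain ⟨W, hne, hh, hl, hc⟩ := iha
    refine ⟨W ++ [(a + 1, b)], by simp, ?_, by simp, ?_⟩
    · rcases List.exists_cons_of_ne_nil hne with ⟨c, t, rfl⟩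
      simpa using hh
    · rw [List.isChain_append]
      refine ⟨hc, by simp, ?_⟩
      intro x hx y hy
      simp only [List.head?_cons, Option.mem_def, Option.some.injEq] at hy
      rw [List.getLast?_eq_getLast hne] at hx hl
      simp only [Option.mem_def, Option.some.injEq] at hx hl
      subst hy; rw [← hx, hl]
      exact Or.inr (Or.inl rfl)

theorem exists_isWarping (m₁ m₂ : ℕ) : ∃ W, IsWarping m₁ m₂ W := by
  obtain ⟨W, hne, hh, hl, hc⟩ := exists_chain_to (m₁ - 1) (m₂ - 1)
  exact ⟨W, isWarping_iff.mpr ⟨hne, hh, hl, hc⟩⟩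

/-- Composition ("merge") of two warpings along the common middle sequence. -/
def merge : List (ℕ × ℕ) → List (ℕ × ℕ) → List (ℕ × ℕ × ℕ)
  | [], _ => []
  | _ :: _, [] => []
  | [e₁], e₂ :: r₂ => (e₂ :: r₂).map fun e => (e₁.1, e.1, e.2)
  | e₁ :: f₁ :: r₁, [e₂] => (e₁ :: f₁ :: r₁).map fun e => (e.1, e.2, e₂.2)
  | e₁ :: f₁ :: r₁, e₂ :: f₂ :: r₂ =>
    (e₁.1, e₁.2, e₂.2) ::
      (if f₁.2 = e₁.2 then merge (f₁ :: r₁) (e₂ :: f₂ :: r₂)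
       else if f₂.1 = e₂.1 then merge (e₁ :: f₁ :: r₁) (f₂ :: r₂)
       else merge (f₁ :: r₁) (f₂ :: r₂))
termination_by W₁ W₂ => W₁.length + W₂.length

set_option maxHeartbeats 2000000 in
theorem merge_spec (m₁ m₂ m₃ : ℕ) (hm₁ : 1 ≤ m₁) (hm₂ : 1 ≤ m₂) (hm₃ : 1 ≤ m₃)
    (f g : ℕ × ℕ → ℝ) (hf : ∀ e, 0 ≤ f e) (hg : ∀ e, 0 ≤ g e) :
    ∀ (W₁ W₂ : List (ℕ × ℕ)) (h₁ : W₁ ≠ []) (h₂ : W₂ ≠ []),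
      List.IsChain Step W₁ → List.IsChain Step W₂ →
      (W₁.head h₁).2 = (W₂.head h₂).1 →
      W₁.getLast h₁ = (m₁ - 1, m₂ - 1) →
      W₂.getLast h₂ = (m₂ - 1, m₃ - 1) →
      (merge W₁ W₂).head? = some ((W₁.head h₁).1, (W₁.head h₁).2, (W₂.head h₂).2) ∧
      (merge W₁ W₂).getLast? = some (m₁ - 1, m₂ - 1, m₃ - 1) ∧
      List.IsChain Wk ((merge W₁ W₂).map fun u => (u.1, u.2.2)) ∧
      ((merge W₁ W₂).map fun u => f (u.1, u.2.1)).sum + ((W₂.head h₂).2 : ℝ) * f (W₁.head h₁)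
          ≤ (m₃ : ℝ) * (W₁.map f).sum ∧
      ((merge W₁ W₂).map fun u => g u.2).sum + ((W₁.head h₁).1 : ℝ) * g (W₂.head h₂)
          ≤ (m₁ : ℝ) * (W₂.map g).sum := by
  intro W₁ W₂
  induction W₁, W₂ using merge.induct with
  | case1 W₂ => intro h₁; exact absurd rfl h₁
  | case2 a l => intro _ h₂; exact absurd rfl h₂
  | case3 e₁ e₂ r₂ =>
    intro h₁ h₂ hc₁ hc₂ hj hl₁ hl₂
    simp only [List.head_cons] at hj ⊢
    simp only [List.getLast_singleton] at hl₁
    have hm : merge [e₁] (e₂ :: r₂) = (e₂ :: r₂).map fun e => (e₁.1, e.1, e.2) := by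
      rw [merge]
    have he₁1 : e₁.1 = m₁ - 1 := by rw [hl₁]
    have he₁2 : e₁.2 = m₂ - 1 := by rw [hl₁]
    have hfst : ∀ e ∈ e₂ :: r₂, e.1 = m₂ - 1 := by
      intro e he
      have h1 := (head_le_chain hc₂ h₂ he).1
      have h2 := (chain_le_getLast _ hc₂ h₂ e he).1
      rw [hl₂] at h2
      simp only [List.head_cons] at h1
      omega
    have hlen : e₂.2 + r₂.length = m₃ - 1 := by
      have hcf := chain_const_fst hc₂ h₂ ?_
      · rw [hl₂] at hcf
        simp only [List.head_cons, List.length_cons] at hcf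
        omega
      · intro e he
        simp only [List.head_cons]
        rw [hfst e he, hfst e₂ (by simp)]
    rw [hm]
    refine ⟨?_, ?_, ?_, ?_, ?_⟩
    · simp only [List.map_cons, List.head?_cons]
      rw [hj]
    · rw [List.getLast?_map, List.getLast?_eq_getLast h₂, hl₂, he₁1]
      rfl
    · rw [List.map_map, List.isChain_map]
      apply hc₂.imp
      intro a b hab
      rcases hab with h' | h' | h' <;> subst h' <;> simp [Wk, Step]
    · rw [List.map_map]
      have hconst : ((e₂ :: r₂).map ((fun u : ℕ × ℕ × ℕ => f (u.1, u.2.1)) ∘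
          (fun e : ℕ × ℕ => (e₁.1, e.1, e.2)))) = (e₂ :: r₂).map fun _ => f e₁ := by
        apply List.map_congr_left
        intro e he
        show f (e₁.1, e.1) = f e₁
        have h12 : e.1 = e₁.2 := by rw [hfst e he, he₁2]
        rw [h12]
      rw [hconst, List.map_const', List.sum_replicate, nsmul_eq_mul]
      simp only [List.map_cons, List.map_nil, List.sum_cons, List.sum_nil, List.head_cons,
        List.length_cons]
      have hcast : ((r₂.length + 1 + e₂.2 : ℕ) : ℝ) = (m₃ : ℝ) := by
        have : r₂.length + 1 + e₂.2 = m₃ := by omega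
        rw [this]
      push_cast at hcast ⊢
      nlinarith [hf e₁, hcast]
    · rw [List.map_map]
      have hconst : ((e₂ :: r₂).map ((fun u : ℕ × ℕ × ℕ => g u.2) ∘
          (fun e : ℕ × ℕ => (e₁.1, e.1, e.2)))) = (e₂ :: r₂).map g := by
        apply List.map_congr_left
        intro e _
        rfl
      rw [hconst]
      have hge : g e₂ ≤ ((e₂ :: r₂).map g).sum := by
        simp only [List.map_cons, List.sum_cons]
        have : 0 ≤ (r₂.map g).sum := by
          apply List.sum_nonneg
          intro a ha
          simp only [List.mem_map] at ha
          obtain ⟨e, _, rfl⟩ := ha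
          exact hg e
        linarith
      have hcast : ((m₁ - 1 : ℕ) : ℝ) = (m₁ : ℝ) - 1 := by
        push_cast [hm₁]; ring
      rw [he₁1, hcast]
      have h0 : (0 : ℝ) ≤ (m₁ : ℝ) - 1 := by
        have : (1 : ℝ) ≤ (m₁ : ℝ) := by exact_mod_cast hm₁
        linarith
      nlinarith [mul_le_mul_of_nonneg_left hge h0]
  | case4 e₁ f₁ r₁ e₂ =>
    intro h₁ h₂ hc₁ hc₂ hj hl₁ hl₂
    simp only [List.head_cons] at hj ⊢
    simp only [List.getLast_singleton] at hl₂
    have hm : merge (e₁ :: f₁ :: r₁) [e₂] = (e₁ :: f₁ :: r₁).map fun e => (e.1, e.2, e₂.2) := by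
      rw [merge]
    have he₂1 : e₂.1 = m₂ - 1 := by rw [hl₂]
    have he₂2 : e₂.2 = m₃ - 1 := by rw [hl₂]
    have hsnd : ∀ e ∈ e₁ :: f₁ :: r₁, e.2 = m₂ - 1 := by
      intro e he
      have h1 := (head_le_chain hc₁ h₁ he).2
      have h2 := (chain_le_getLast _ hc₁ h₁ e he).2
      rw [hl₁] at h2
      simp only [List.head_cons] at h1
      omega
    have hlen : e₁.1 + (r₁.length + 1) = m₁ - 1 := by
      have hcf := chain_const_snd hc₁ h₁ ?_
      · rw [hl₁] at hcf
        simp only [List.head_cons, List.length_cons] at hcf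
        omega
      · intro e he
        simp only [List.head_cons]
        rw [hsnd e he, hsnd e₁ (by simp)]
    rw [hm]
    refine ⟨?_, ?_, ?_, ?_, ?_⟩
    · simp
    · rw [List.getLast?_map, List.getLast?_eq_getLast h₁, hl₁, he₂2]
      rfl
    · rw [List.map_map, List.isChain_map]
      apply hc₁.imp
      intro a b hab
      rcases hab with h' | h' | h' <;> subst h' <;> simp [Wk, Step]
    · rw [List.map_map]
      have hconst : ((e₁ :: f₁ :: r₁).map ((fun u : ℕ × ℕ × ℕ => f (u.1, u.2.1)) ∘
          (fun e : ℕ × ℕ => (e.1, e.2, e₂.2)))) = (e₁ :: f₁ :: r₁).map f := by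
        apply List.map_congr_left
        intro e _
        rfl
      rw [hconst]
      have hge : f e₁ ≤ ((e₁ :: f₁ :: r₁).map f).sum := by
        simp only [List.map_cons, List.sum_cons]
        have h1 : 0 ≤ (r₁.map f).sum := by
          apply List.sum_nonneg
          intro a ha
          simp only [List.mem_map] at ha
          obtain ⟨e, _, rfl⟩ := ha
          exact hf e
        have := hf f₁
        linarith
      have hcast : ((m₃ - 1 : ℕ) : ℝ) = (m₃ : ℝ) - 1 := by
        push_cast [hm₃]; ring
      rw [he₂2, hcast]
      have h0 : (0 : ℝ) ≤ (m₃ : ℝ) - 1 := by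
        have : (1 : ℝ) ≤ (m₃ : ℝ) := by exact_mod_cast hm₃
        linarith
      nlinarith [mul_le_mul_of_nonneg_left hge h0]
    · rw [List.map_map]
      have hconst : ((e₁ :: f₁ :: r₁).map ((fun u : ℕ × ℕ × ℕ => g u.2) ∘
          (fun e : ℕ × ℕ => (e.1, e.2, e₂.2)))) = (e₁ :: f₁ :: r₁).map fun _ => g e₂ := by
        apply List.map_congr_left
        intro e he
        show g (e.2, e₂.2) = g e₂
        have h12 : e.2 = e₂.1 := by rw [hsnd e he, he₂1]
        rw [h12]
      rw [hconst, List.map_const', List.sum_replicate, nsmul_eq_mul]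
      simp only [List.map_cons, List.map_nil, List.sum_cons, List.sum_nil, List.length_cons]
      have hcast : ((r₁.length + 1 + 1 + e₁.1 : ℕ) : ℝ) = (m₁ : ℝ) := by
        have : r₁.length + 1 + 1 + e₁.1 = m₁ := by omega
        rw [this]
      push_cast at hcast ⊢
      nlinarith [hg e₂, hcast]
  | case5 e₁ f₁ r₁ e₂ f₂ r₂ ih1 ih2 ih3 =>
    intro h₁ h₂ hc₁ hc₂ hj hl₁ hl₂
    simp only [List.head_cons] at hj ⊢
    have hs₁ : Step e₁ f₁ := (List.isChain_cons_cons.mp hc₁).1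
    have hs₂ : Step e₂ f₂ := (List.isChain_cons_cons.mp hc₂).1
    have hl₁' : (f₁ :: r₁).getLast (by simp) = (m₁ - 1, m₂ - 1) := by
      rw [← hl₁]; exact (List.getLast_cons (by simp)).symm
    have hl₂' : (f₂ :: r₂).getLast (by simp) = (m₂ - 1, m₃ - 1) := by
      rw [← hl₂]; exact (List.getLast_cons (by simp)).symm
    have he₂2 : e₂.2 + 1 ≤ m₃ := by
      have := (chain_le_getLast _ hc₂ h₂ e₂ (by simp)).2
      rw [hl₂] at this; omega
    have he₁1 : e₁.1 + 1 ≤ m₁ := by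
      have := (chain_le_getLast _ hc₁ h₁ e₁ (by simp)).1
      rw [hl₁] at this; omega
    have he₂2R : (e₂.2 : ℝ) + 1 ≤ (m₃ : ℝ) := by exact_mod_cast he₂2
    have he₁1R : (e₁.1 : ℝ) + 1 ≤ (m₁ : ℝ) := by exact_mod_cast he₁1
    have heta : f (e₁.1, e₁.2) = f e₁ := rfl
    have hgeta : g (e₁.2, e₂.2) = g e₂ := by rw [hj]
    have hsplit₁ : ((e₁ :: f₁ :: r₁).map f).sum = f e₁ + ((f₁ :: r₁).map f).sum := by
      rw [List.map_cons, List.sum_cons]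
    have hsplit₂ : ((e₂ :: f₂ :: r₂).map g).sum = g e₂ + ((f₂ :: r₂).map g).sum := by
      rw [List.map_cons, List.sum_cons]
    by_cases hA : f₁.2 = e₁.2
    · -- advance W₁ alone
      have hm : merge (e₁ :: f₁ :: r₁) (e₂ :: f₂ :: r₂) =
          (e₁.1, e₁.2, e₂.2) :: merge (f₁ :: r₁) (e₂ :: f₂ :: r₂) := by
        rw [merge, if_pos hA]
      have hf11 : f₁.1 = e₁.1 + 1 := by
        rcases hs₁ with h' | h' | h'
        · exfalso; rw [h'] at hA; simp at hA
        · rw [h']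
        · exfalso; rw [h'] at hA; simp at hA
      obtain ⟨IHh, IHl, IHc, IH5, IH6⟩ := ih1 (by simp) (by simp) hc₁.tail hc₂
        (by simp only [List.head_cons]; omega) hl₁' hl₂
      simp only [List.head_cons] at IHh IH5 IH6
      have hne' : merge (f₁ :: r₁) (e₂ :: f₂ :: r₂) ≠ [] := by
        intro h0; rw [h0] at IHh; simp at IHh
      rw [hm]
      refine ⟨by simp, ?_, ?_, ?_, ?_⟩
      · obtain ⟨ct, tt, hct⟩ := List.exists_cons_of_ne_nil hne'
        rw [hct, List.getLast?_cons_cons, ← hct, IHl]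
      · rw [List.map_cons, List.isChain_cons]
        refine ⟨?_, IHc⟩
        intro y hy
        rw [List.head?_map, IHh] at hy
        simp only [Option.map_some, Option.mem_def, Option.some.injEq] at hy
        subst hy
        exact Or.inr (Or.inr (Or.inl (by rw [hf11])))
      · rw [List.map_cons, List.sum_cons, heta, hsplit₁]
        have hp1 : ((e₂.2 : ℝ) + 1) * f e₁ ≤ (m₃ : ℝ) * f e₁ :=
          mul_le_mul_of_nonneg_right he₂2R (hf e₁)
        have hp2 : (0 : ℝ) ≤ (e₂.2 : ℝ) * f f₁ := mul_nonneg (Nat.cast_nonneg _) (hf f₁)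
        nlinarith [IH5, hp1, hp2]
      · rw [List.map_cons, List.sum_cons]
        show g (e₁.2, e₂.2) + _ + _ ≤ _
        rw [hgeta]
        rw [hf11] at IH6
        push_cast at IH6
        linarith [IH6]
    · by_cases hB : f₂.1 = e₂.1
      · -- advance W₂ alone
        have hm : merge (e₁ :: f₁ :: r₁) (e₂ :: f₂ :: r₂) =
            (e₁.1, e₁.2, e₂.2) :: merge (e₁ :: f₁ :: r₁) (f₂ :: r₂) := by
          rw [merge, if_neg hA, if_pos hB]
        have hf22 : f₂.2 = e₂.2 + 1 := by
          rcases hs₂ with h' | h' | h'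
          · rw [h']
          · exfalso; rw [h'] at hB; simp at hB
          · exfalso; rw [h'] at hB; simp at hB
        obtain ⟨IHh, IHl, IHc, IH5, IH6⟩ := ih2 (by simp) (by simp) hc₁ hc₂.tail
          (by simp only [List.head_cons]; omega) hl₁ hl₂'
        simp only [List.head_cons] at IHh IH5 IH6
        have hne' : merge (e₁ :: f₁ :: r₁) (f₂ :: r₂) ≠ [] := by
          intro h0; rw [h0] at IHh; simp at IHh
        rw [hm]
        refine ⟨by simp, ?_, ?_, ?_, ?_⟩
        · obtain ⟨ct, tt, hct⟩ := List.exists_cons_of_ne_nil hne'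
          rw [hct, List.getLast?_cons_cons, ← hct, IHl]
        · rw [List.map_cons, List.isChain_cons]
          refine ⟨?_, IHc⟩
          intro y hy
          rw [List.head?_map, IHh] at hy
          simp only [Option.map_some, Option.mem_def, Option.some.injEq] at hy
          subst hy
          exact Or.inr (Or.inl (by rw [hf22]))
        · rw [List.map_cons, List.sum_cons, heta]
          rw [hf22] at IH5
          push_cast at IH5
          nlinarith [IH5]
        · rw [List.map_cons, List.sum_cons]
          show g (e₁.2, e₂.2) + _ + _ ≤ _
          rw [hgeta, hsplit₂]
          have hp1 : ((e₁.1 : ℝ) + 1) * g e₂ ≤ (m₁ : ℝ) * g e₂ :=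
            mul_le_mul_of_nonneg_right he₁1R (hg e₂)
          have hp2 : (0 : ℝ) ≤ (e₁.1 : ℝ) * g f₂ := mul_nonneg (Nat.cast_nonneg _) (hg f₂)
          nlinarith [IH6, hp1, hp2]
      · -- advance both
        have hm : merge (e₁ :: f₁ :: r₁) (e₂ :: f₂ :: r₂) =
            (e₁.1, e₁.2, e₂.2) :: merge (f₁ :: r₁) (f₂ :: r₂) := by
          rw [merge, if_neg hA, if_neg hB]
        have hf1 : f₁.2 = e₁.2 + 1 ∧ (f₁.1 = e₁.1 ∨ f₁.1 = e₁.1 + 1) := by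
          rcases hs₁ with h' | h' | h'
          · rw [h']; exact ⟨rfl, Or.inl rfl⟩
          · exact absurd (by rw [h']) hA
          · rw [h']; exact ⟨rfl, Or.inr rfl⟩
        have hf2 : f₂.1 = e₂.1 + 1 ∧ (f₂.2 = e₂.2 ∨ f₂.2 = e₂.2 + 1) := by
          rcases hs₂ with h' | h' | h'
          · exact absurd (by rw [h']) hB
          · rw [h']; exact ⟨rfl, Or.inl rfl⟩
          · rw [h']; exact ⟨rfl, Or.inr rfl⟩
        obtain ⟨IHh, IHl, IHc, IH5, IH6⟩ := ih3 (by simp) (by simp) hc₁.tail hc₂.tail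
          (by simp only [List.head_cons]; omega) hl₁' hl₂'
        simp only [List.head_cons] at IHh IH5 IH6
        have hne' : merge (f₁ :: r₁) (f₂ :: r₂) ≠ [] := by
          intro h0; rw [h0] at IHh; simp at IHh
        rw [hm]
        refine ⟨by simp, ?_, ?_, ?_, ?_⟩
        · obtain ⟨ct, tt, hct⟩ := List.exists_cons_of_ne_nil hne'
          rw [hct, List.getLast?_cons_cons, ← hct, IHl]
        · rw [List.map_cons, List.isChain_cons]
          refine ⟨?_, IHc⟩
          intro y hy
          rw [List.head?_map, IHh] at hy
          simp only [Option.map_some, Option.mem_def, Option.some.injEq] at hy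
          subst hy
          rcases hf1.2 with h1 | h1 <;> rcases hf2.2 with h2 | h2
          · exact Or.inl (by rw [h1, h2])
          · exact Or.inr (Or.inl (by rw [h1, h2]))
          · exact Or.inr (Or.inr (Or.inl (by rw [h1, h2])))
          · exact Or.inr (Or.inr (Or.inr (by rw [h1, h2])))
        · rw [List.map_cons, List.sum_cons, heta, hsplit₁]
          have hp1 : ((e₂.2 : ℝ) + 1) * f e₁ ≤ (m₃ : ℝ) * f e₁ :=
            mul_le_mul_of_nonneg_right he₂2R (hf e₁)
          have hp2 : (0 : ℝ) ≤ (f₂.2 : ℝ) * f f₁ := mul_nonneg (Nat.cast_nonneg _) (hf f₁)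
          nlinarith [IH5, hp1, hp2]
        · rw [List.map_cons, List.sum_cons]
          show g (e₁.2, e₂.2) + _ + _ ≤ _
          rw [hgeta, hsplit₂]
          have hp1 : ((e₁.1 : ℝ) + 1) * g e₂ ≤ (m₁ : ℝ) * g e₂ :=
            mul_le_mul_of_nonneg_right he₁1R (hg e₂)
          have hp2 : (0 : ℝ) ≤ (f₁.1 : ℝ) * g f₂ := mul_nonneg (Nat.cast_nonneg _) (hg f₂)
          nlinarith [IH6, hp1, hp2]

section dtwBasic

variable {X : Type*} [MetricSpace X] [Inhabited X]

theorem warpCost_nonneg (p : ℝ) (x y : List X) (W : List (ℕ × ℕ)) :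
    0 ≤ warpCost p x y W := by
  apply List.sum_nonneg
  intro a ha
  simp only [List.mem_map] at ha
  obtain ⟨ij, _, rfl⟩ := ha
  exact Real.rpow_nonneg dist_nonneg p

theorem dtw_nonneg (p : ℝ) (x y : List X) : 0 ≤ dtw p x y := by
  apply Real.sInf_nonneg
  rintro c ⟨W, _, rfl⟩
  exact Real.rpow_nonneg (warpCost_nonneg p x y W) _

theorem dtw_bddBelow (p : ℝ) (x y : List X) :
    BddBelow { c : ℝ | ∃ W, IsWarping x.length y.length W ∧ c = warpCost p x y W ^ (1 / p) } := by
  refine ⟨0, ?_⟩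
  rintro c ⟨W, _, rfl⟩
  exact Real.rpow_nonneg (warpCost_nonneg p x y W) _

theorem dtw_set_nonempty (p : ℝ) (x y : List X) :
    { c : ℝ | ∃ W, IsWarping x.length y.length W ∧
        c = warpCost p x y W ^ (1 / p) }.Nonempty := by
  obtain ⟨W, hW⟩ := exists_isWarping x.length y.length
  exact ⟨_, W, hW, rfl⟩

theorem dtw_le (p : ℝ) (x y : List X) {W : List (ℕ × ℕ)}
    (hW : IsWarping x.length y.length W) :
    dtw p x y ≤ warpCost p x y W ^ (1 / p) :=
  csInf_le (dtw_bddBelow p x y) ⟨W, hW, rfl⟩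

theorem step_swap {a b : ℕ × ℕ} (h : Step a b) : Step a.swap b.swap := by
  rcases h with h | h | h <;> subst h <;> simp [Step, Prod.swap, Prod.ext_iff] <;> tauto

theorem isWarping_swap {m₁ m₂ : ℕ} {W : List (ℕ × ℕ)} (h : IsWarping m₁ m₂ W) :
    IsWarping m₂ m₁ (W.map Prod.swap) := by
  rw [isWarping_iff] at h ⊢
  obtain ⟨hne, hh, hl, hc⟩ := h
  refine ⟨by simpa using hne, ?_, ?_, ?_⟩
  · rw [List.head?_map, hh]; rfl
  · rw [List.getLast?_map, hl]; rfl
  · rw [List.isChain_map]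
    exact hc.imp fun _ _ => step_swap

theorem dtw_symm (p : ℝ) (x y : List X) : dtw p x y = dtw p y x := by
  unfold dtw
  congr 1
  ext c
  constructor
  · rintro ⟨W, hW, rfl⟩
    refine ⟨W.map Prod.swap, isWarping_swap hW, ?_⟩
    unfold warpCost
    rw [List.map_map]
    congr 2
    apply List.map_congr_left
    intro e _
    simp [Function.comp, dist_comm]
  · rintro ⟨W, hW, rfl⟩
    refine ⟨W.map Prod.swap, isWarping_swap hW, ?_⟩
    unfold warpCost
    rw [List.map_map]
    congr 2
    apply List.map_congr_left
    intro e _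
    simp [Function.comp, dist_comm]

theorem list_Lp_add_le {α : Type*} {p : ℝ} (hp : 1 ≤ p) (l : List α) (F G : α → ℝ)
    (hF : ∀ a, 0 ≤ F a) (hG : ∀ a, 0 ≤ G a) :
    ((l.map fun a => (F a + G a) ^ p).sum) ^ (1 / p) ≤
      ((l.map fun a => F a ^ p).sum) ^ (1 / p) + ((l.map fun a => G a ^ p).sum) ^ (1 / p) := by
  have h1 : ∀ H : α → ℝ, (l.map H).sum = ∑ i : Fin l.length, H l[i.1] := fun H =>
    (Fin.sum_univ_fun_getElem l H).symm
  rw [h1, h1, h1]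
  exact Real.Lp_add_le_of_nonneg (s := Finset.univ) (f := fun i : Fin l.length => F l[i.1])
    (g := fun i : Fin l.length => G l[i.1]) hp (fun i _ => hF _) (fun i _ => hG _)

set_option maxHeartbeats 4000000 in
theorem dtw_triangle (p : ℝ) (hp : 1 ≤ p) (x y z : List X)
    (hx : x ≠ []) (hy : y ≠ []) (hz : z ≠ []) :
    dtw p x z ≤ (z.length : ℝ) ^ (1 / p) * dtw p x y +
      (x.length : ℝ) ^ (1 / p) * dtw p y z := by
  have hp0 : (0 : ℝ) ≤ p := by linarith
  have hip0 : (0 : ℝ) ≤ 1 / p := by positivity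
  set A : ℝ := (z.length : ℝ) ^ (1 / p) with hA
  set B : ℝ := (x.length : ℝ) ^ (1 / p) with hB
  have hA0 : 0 ≤ A := Real.rpow_nonneg (Nat.cast_nonneg _) _
  have hB0 : 0 ≤ B := Real.rpow_nonneg (Nat.cast_nonneg _) _
  apply le_of_forall_pos_le_add
  intro ε hε
  set ε' : ℝ := ε / (A + B + 1) with hε'def
  have hε'0 : 0 < ε' := by positivity
  obtain ⟨a₁, ha₁mem, ha₁⟩ := Real.lt_sInf_add_pos (dtw_set_nonempty p x y) hε'0
  obtain ⟨a₂, ha₂mem, ha₂⟩ := Real.lt_sInf_add_pos (dtw_set_nonempty p y z) hε'0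
  obtain ⟨W₁, hW₁, rfl⟩ := ha₁mem
  obtain ⟨W₂, hW₂, rfl⟩ := ha₂mem
  rw [isWarping_iff] at hW₁ hW₂
  obtain ⟨hne₁, hh₁, hl₁, hc₁⟩ := hW₁
  obtain ⟨hne₂, hh₂, hl₂, hc₂⟩ := hW₂
  have hh₁' : W₁.head hne₁ = (0, 0) := by
    rw [List.head?_eq_head hne₁] at hh₁; exact Option.some.inj hh₁
  have hh₂' : W₂.head hne₂ = (0, 0) := by
    rw [List.head?_eq_head hne₂] at hh₂; exact Option.some.inj hh₂
  have hl₁' : W₁.getLast hne₁ = (x.length - 1, y.length - 1) := by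
    rw [List.getLast?_eq_getLast hne₁] at hl₁; exact Option.some.inj hl₁
  have hl₂' : W₂.getLast hne₂ = (y.length - 1, z.length - 1) := by
    rw [List.getLast?_eq_getLast hne₂] at hl₂; exact Option.some.inj hl₂
  have hm₁ : 1 ≤ x.length := List.length_pos_iff.mpr hx
  have hm₂ : 1 ≤ y.length := List.length_pos_iff.mpr hy
  have hm₃ : 1 ≤ z.length := List.length_pos_iff.mpr hz
  set f : ℕ × ℕ → ℝ := fun e => dist (x.getD e.1 default) (y.getD e.2 default) ^ p with hfdef
  set g : ℕ × ℕ → ℝ := fun e => dist (y.getD e.1 default) (z.getD e.2 default) ^ p with hgdef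
  have hf : ∀ e, 0 ≤ f e := fun e => Real.rpow_nonneg dist_nonneg p
  have hg : ∀ e, 0 ≤ g e := fun e => Real.rpow_nonneg dist_nonneg p
  obtain ⟨Hh, Hl, Hc, H5, H6⟩ := merge_spec x.length y.length z.length hm₁ hm₂ hm₃ f g hf hg
    W₁ W₂ hne₁ hne₂ hc₁ hc₂ (by rw [hh₁', hh₂']) hl₁' hl₂'
  set t : List (ℕ × ℕ × ℕ) := merge W₁ W₂ with htdef
  set P : List (ℕ × ℕ) := t.map fun u => (u.1, u.2.2) with hPdef
  have htne : t ≠ [] := by intro h0; rw [h0] at Hh; simp at Hh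
  have hPne : P ≠ [] := by simp [hPdef, htne]
  have hW₃ : IsWarping x.length z.length (dd P) := by
    rw [isWarping_iff]
    refine ⟨dd_ne_nil P hPne, ?_, ?_, dd_chain P Hc⟩
    · rw [dd_head?, hPdef, List.head?_map, Hh, hh₁', hh₂']
      rfl
    · rw [dd_getLast?, hPdef, List.getLast?_map, Hl]
      rfl
  have hdtw_le : dtw p x z ≤ warpCost p x z (dd P) ^ (1 / p) := dtw_le p x z hW₃
  -- cost of the composed warping
  have hsub : warpCost p x z (dd P) ≤
      (t.map fun u => dist (x.getD u.1 default) (z.getD u.2.2 default) ^ p).sum := by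
    unfold warpCost
    have h1 : ((dd P).map fun ij => dist (x.getD ij.1 default) (z.getD ij.2 default) ^ p).Sublist
        (P.map fun ij => dist (x.getD ij.1 default) (z.getD ij.2 default) ^ p) :=
      (dd_sublist P).map _
    have h2 := List.Sublist.sum_le_sum h1 ?_
    · refine le_trans h2 (le_of_eq ?_)
      rw [hPdef, List.map_map]
      rfl
    · intro a ha
      simp only [List.mem_map] at ha
      obtain ⟨ij, _, rfl⟩ := ha
      exact Real.rpow_nonneg dist_nonneg p
  have htri : (t.map fun u => dist (x.getD u.1 default) (z.getD u.2.2 default) ^ p).sum ≤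
      (t.map fun u => (dist (x.getD u.1 default) (y.getD u.2.1 default) +
        dist (y.getD u.2.1 default) (z.getD u.2.2 default)) ^ p).sum := by
    apply List.sum_le_sum
    intro u _
    exact Real.rpow_le_rpow dist_nonneg (dist_triangle _ _ _) hp0
  -- Minkowski
  have hmink' := list_Lp_add_le hp t
      (fun u => dist (x.getD u.1 default) (y.getD u.2.1 default))
      (fun u => dist (y.getD u.2.1 default) (z.getD u.2.2 default))
      (fun a => dist_nonneg) (fun a => dist_nonneg)
  have hbr1 : (t.map fun u => dist (x.getD u.1 default) (y.getD u.2.1 default) ^ p) =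
      t.map fun u => f (u.1, u.2.1) := rfl
  have hbr2 : (t.map fun u => dist (y.getD u.2.1 default) (z.getD u.2.2 default) ^ p) =
      t.map fun u => g u.2 := rfl
  rw [hbr1, hbr2] at hmink'
  have hmink : ((t.map fun u => (dist (x.getD u.1 default) (y.getD u.2.1 default) +
        dist (y.getD u.2.1 default) (z.getD u.2.2 default)) ^ p).sum) ^ (1 / p) ≤
      ((t.map fun u => f (u.1, u.2.1)).sum) ^ (1 / p) +
      ((t.map fun u => g u.2).sum) ^ (1 / p) := hmink'
  have hS1 : (t.map fun u => f (u.1, u.2.1)).sum ≤ (z.length : ℝ) * warpCost p x y W₁ := by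
    have hnn : 0 ≤ ((W₂.head hne₂).2 : ℝ) * f (W₁.head hne₁) :=
      mul_nonneg (Nat.cast_nonneg _) (hf _)
    have heq : (W₁.map f).sum = warpCost p x y W₁ := rfl
    rw [heq] at H5
    linarith [H5]
  have hS2 : (t.map fun u => g u.2).sum ≤ (x.length : ℝ) * warpCost p y z W₂ := by
    have hnn : 0 ≤ ((W₁.head hne₁).1 : ℝ) * g (W₂.head hne₂) :=
      mul_nonneg (Nat.cast_nonneg _) (hg _)
    have heq : (W₂.map g).sum = warpCost p y z W₂ := rfl
    rw [heq] at H6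
    linarith [H6]
  have hsum1nn : (0 : ℝ) ≤ (t.map fun u => f (u.1, u.2.1)).sum :=
    List.sum_nonneg (by
      intro a ha
      simp only [List.mem_map] at ha
      obtain ⟨u, _, rfl⟩ := ha
      exact hf _)
  have hsum2nn : (0 : ℝ) ≤ (t.map fun u => g u.2).sum :=
    List.sum_nonneg (by
      intro a ha
      simp only [List.mem_map] at ha
      obtain ⟨u, _, rfl⟩ := ha
      exact hg _)
  have hr1 : ((t.map fun u => f (u.1, u.2.1)).sum) ^ (1 / p) ≤
      A * (warpCost p x y W₁ ^ (1 / p)) := by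
    calc ((t.map fun u => f (u.1, u.2.1)).sum) ^ (1 / p)
        ≤ ((z.length : ℝ) * warpCost p x y W₁) ^ (1 / p) :=
          Real.rpow_le_rpow hsum1nn hS1 hip0
      _ = A * (warpCost p x y W₁ ^ (1 / p)) := by
          rw [Real.mul_rpow (Nat.cast_nonneg _) (warpCost_nonneg p x y W₁)]
  have hr2 : ((t.map fun u => g u.2).sum) ^ (1 / p) ≤
      B * (warpCost p y z W₂ ^ (1 / p)) := by
    calc ((t.map fun u => g u.2).sum) ^ (1 / p)
        ≤ ((x.length : ℝ) * warpCost p y z W₂) ^ (1 / p) :=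
          Real.rpow_le_rpow hsum2nn hS2 hip0
      _ = B * (warpCost p y z W₂ ^ (1 / p)) := by
          rw [Real.mul_rpow (Nat.cast_nonneg _) (warpCost_nonneg p y z W₂)]
  have hmono : warpCost p x z (dd P) ^ (1 / p) ≤
      ((t.map fun u => (dist (x.getD u.1 default) (y.getD u.2.1 default) +
        dist (y.getD u.2.1 default) (z.getD u.2.2 default)) ^ p).sum) ^ (1 / p) :=
    Real.rpow_le_rpow (warpCost_nonneg p x z _) (le_trans hsub htri) hip0
  have hd1 : warpCost p x y W₁ ^ (1 / p) ≤ dtw p x y + ε' := le_of_lt ha₁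
  have hd2 : warpCost p y z W₂ ^ (1 / p) ≤ dtw p y z + ε' := le_of_lt ha₂
  have hfin1 : A * (warpCost p x y W₁ ^ (1 / p)) ≤ A * (dtw p x y + ε') :=
    mul_le_mul_of_nonneg_left hd1 hA0
  have hfin2 : B * (warpCost p y z W₂ ^ (1 / p)) ≤ B * (dtw p y z + ε') :=
    mul_le_mul_of_nonneg_left hd2 hB0
  have hεbound : (A + B) * ε' ≤ ε := by
    rw [hε'def, ← mul_div_assoc, div_le_iff₀ (by positivity : (0:ℝ) < A + B + 1)]
    nlinarith [hε.le]
  have hAB1 : A * (dtw p x y + ε') + B * (dtw p y z + ε') ≤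
      A * dtw p x y + B * dtw p y z + ε := by nlinarith [hεbound]
  linarith [hdtw_le, hmono, hmink, hr1, hr2, hfin1, hfin2, hAB1]

end dtwBasic

theorem markov {ι : Type*} (s : Finset ι) (f : ι → ℝ) (h0 : ∀ a ∈ s, 0 ≤ f a)
    (C : ℝ) (hC : ∑ a ∈ s, f a ≤ C) (P : ι → Prop) [DecidablePred P]
    (hP : ∀ a ∈ s, ¬ P a → 2 * C < (s.card : ℝ) * f a) :
    s.card ≤ 2 * (s.filter P).card := by
  classical
  have hsplit := Finset.card_filter_add_card_filter_not (s := s) (p := P)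
  set bad := s.filter fun a => ¬ P a with hbad
  rcases bad.eq_empty_or_nonempty with hb | hb
  · rw [hb] at hsplit
    simp at hsplit
    omega
  · have hCnn : 0 ≤ C := le_trans (Finset.sum_nonneg h0) hC
    have hsum1 : ∑ _a ∈ bad, (2 * C) < ∑ a ∈ bad, (s.card : ℝ) * f a := by
      apply Finset.sum_lt_sum_of_nonempty hb
      intro a ha
      rw [hbad, Finset.mem_filter] at ha
      exact hP a ha.1 ha.2
    have hsum2 : ∑ a ∈ bad, (s.card : ℝ) * f a ≤ (s.card : ℝ) * C := by
      rw [← Finset.mul_sum]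
      apply mul_le_mul_of_nonneg_left _ (Nat.cast_nonneg _)
      refine le_trans (Finset.sum_le_sum_of_subset_of_nonneg (Finset.filter_subset _ _) ?_) hC
      intro a ha _
      exact h0 a ha
    rw [Finset.sum_const, nsmul_eq_mul] at hsum1
    have key : (bad.card : ℝ) * (2 * C) < (s.card : ℝ) * C := lt_of_lt_of_le hsum1 hsum2
    have hCpos : 0 < C := by
      rcases lt_or_eq_of_le hCnn with h | h
      · exact h
      · exfalso; rw [← h] at key; simp at key
    have hlt : (2 * bad.card : ℝ) < (s.card : ℝ) := by
      have h2 : (2 * bad.card : ℝ) * C < (s.card : ℝ) * C := by ring_nf; ring_nf at key; linarith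
      exact lt_of_mul_lt_mul_right h2 hCpos.le
    have : 2 * bad.card < s.card := by exact_mod_cast hlt
    omega

section goodCenter

variable {X : Type*} [MetricSpace X] [Inhabited X]

theorem good_center (T : Finset (List X)) (m ℓ : ℕ)
    (hm : ∀ τ ∈ T, 2 ≤ τ.length ∧ τ.length ≤ m) (hℓ2 : 2 ≤ ℓ)
    (p : ℝ) (hp : 1 ≤ p) (sp : List X → List X)
    (hsimp : ∀ τ ∈ T, SeqLE ℓ (sp τ) ∧
      ∀ π' : List X, SeqLE ℓ π' → dtw p τ (sp τ) ≤ 2 * dtw p τ π')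
    (c : List X) (hc : SeqLE ℓ c) (τ : List X) (hτ : τ ∈ T)
    (hgood : (T.card : ℝ) * dtw p c τ ≤ 2 * ∑ σ ∈ T, dtw p c σ) :
    dtwCost p 1 T (sp τ) ≤ 8 * (m : ℝ) ^ (1 / p) * (ℓ : ℝ) ^ (1 / p) * dtwCost p 1 T c := by
  have hip0 : (0 : ℝ) ≤ 1 / p := by positivity
  set M : ℝ := (m : ℝ) ^ (1 / p) with hMdef
  set L : ℝ := (ℓ : ℝ) ^ (1 / p) with hLdef
  have hM0 : 0 ≤ M := Real.rpow_nonneg (Nat.cast_nonneg _) _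
  have hL0 : 0 ≤ L := Real.rpow_nonneg (Nat.cast_nonneg _) _
  have hL1 : 1 ≤ L := by
    calc (1 : ℝ) = (1 : ℝ) ^ (1 / p) := (Real.one_rpow _).symm
      _ ≤ L := by
        apply Real.rpow_le_rpow (by norm_num) _ hip0
        exact_mod_cast le_trans (by norm_num) hℓ2
  have hτne : τ ≠ [] := by
    intro h; have := (hm τ hτ).1; rw [h] at this; simp at this
  have hcne : c ≠ [] := by
    intro h; have := hc.1; rw [h] at this; simp at this
  have hsne : sp τ ≠ [] := by
    intro h; have := ((hsimp τ hτ).1).1; rw [h] at this; simp at this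
  have hopt : dtw p τ (sp τ) ≤ 2 * dtw p τ c := (hsimp τ hτ).2 c hc
  have hτlen : ((τ.length : ℕ) : ℝ) ^ (1 / p) ≤ M := by
    apply Real.rpow_le_rpow (Nat.cast_nonneg _) _ hip0
    exact_mod_cast (hm τ hτ).2
  have hslen : (((sp τ).length : ℕ) : ℝ) ^ (1 / p) ≤ L := by
    apply Real.rpow_le_rpow (Nat.cast_nonneg _) _ hip0
    exact_mod_cast ((hsimp τ hτ).1).2
  set D := dtw p c τ with hDdef
  have hD0 : 0 ≤ D := dtw_nonneg p c τ
  have h3 : dtw p (sp τ) τ ≤ 2 * D := by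
    rw [dtw_symm, hDdef, ← dtw_symm p τ c]
    exact hopt
  have hkey : ∀ σ ∈ T, dtw p (sp τ) σ ≤
      2 * M * D + L * M * D + L * M * dtw p c σ := by
    intro σ hσ
    have hσne : σ ≠ [] := by
      intro h; have := (hm σ hσ).1; rw [h] at this; simp at this
    have hσlen : ((σ.length : ℕ) : ℝ) ^ (1 / p) ≤ M := by
      apply Real.rpow_le_rpow (Nat.cast_nonneg _) _ hip0
      exact_mod_cast (hm σ hσ).2
    have h1 := dtw_triangle p hp (sp τ) τ σ hsne hτne hσne
    have h2 := dtw_triangle p hp τ c σ hτne hcne hσne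
    have t1 : ((σ.length : ℕ) : ℝ) ^ (1 / p) * dtw p (sp τ) τ ≤ M * (2 * D) :=
      mul_le_mul hσlen h3 (dtw_nonneg p _ _) hM0
    have a1 : ((σ.length : ℕ) : ℝ) ^ (1 / p) * dtw p τ c ≤ M * D := by
      rw [dtw_symm p τ c, ← hDdef]
      exact mul_le_mul_of_nonneg_right hσlen hD0
    have a2 : ((τ.length : ℕ) : ℝ) ^ (1 / p) * dtw p c σ ≤ M * dtw p c σ :=
      mul_le_mul_of_nonneg_right hτlen (dtw_nonneg p _ _)
    have t2 : dtw p τ σ ≤ M * D + M * dtw p c σ := by linarith [h2, a1, a2]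
    have t3 : (((sp τ).length : ℕ) : ℝ) ^ (1 / p) * dtw p τ σ ≤
        L * (M * D + M * dtw p c σ) :=
      mul_le_mul hslen t2 (dtw_nonneg p _ _) hL0
    nlinarith [h1, t1, t3]
  set C := ∑ σ ∈ T, dtw p c σ with hCdef
  have hC0 : 0 ≤ C := Finset.sum_nonneg fun σ _ => dtw_nonneg p _ _
  have hcost_c : dtwCost p 1 T c = C := by
    unfold dtwCost
    exact Finset.sum_congr rfl fun σ _ => Real.rpow_one _
  have hcost_s : dtwCost p 1 T (sp τ) = ∑ σ ∈ T, dtw p (sp τ) σ := by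
    unfold dtwCost
    exact Finset.sum_congr rfl fun σ _ => Real.rpow_one _
  have hsumle : ∑ σ ∈ T, dtw p (sp τ) σ ≤
      ∑ σ ∈ T, (2 * M * D + L * M * D + L * M * dtw p c σ) :=
    Finset.sum_le_sum hkey
  have hsumeq : ∑ σ ∈ T, (2 * M * D + L * M * D + L * M * dtw p c σ) =
      (T.card : ℝ) * (2 * M * D + L * M * D) + L * M * C := by
    rw [Finset.sum_add_distrib, Finset.sum_const, nsmul_eq_mul, ← Finset.mul_sum]
  have h6 : (T.card : ℝ) * (2 * M * D + L * M * D) = (2 * M + L * M) * ((T.card : ℝ) * D) := by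
    ring
  have h7 : (2 * M + L * M) * ((T.card : ℝ) * D) ≤ (2 * M + L * M) * (2 * C) := by
    apply mul_le_mul_of_nonneg_left _ (by nlinarith [hM0, hL0])
    exact hgood
  have h8 : (2 * M + L * M) * (2 * C) + L * M * C ≤ 8 * M * L * C := by
    nlinarith [mul_nonneg hM0 hC0, mul_nonneg (mul_nonneg hM0 hC0) (sub_nonneg.mpr hL1),
      sub_nonneg.mpr hL1]
  rw [hcost_s, hcost_c]
  linarith [hsumle, hsumeq.le, hsumeq.ge, h6.le, h7, h8]

end goodCenter

end DTWAux

/-- **Rough cost estimate from random simplifications** (Lemma `lemma:roughapprox`):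
sampling `⌈log₂(2/δ)⌉` sequences from `T` uniformly and independently with replacement
(modelled by the uniform space of functions `Fin ⌈log₂(2/δ)⌉ → T`), with probability at
least `1 - δ/2` some sampled sequence `τ` has
`cost_p^1(T, τ') ≤ 8 m^{1/p} ℓ^{1/p} cost_p^1(T, c)` where `τ'` is its fixed
`(2,ℓ)`-simplification and `c` is an optimal restricted `(p,1)`-mean. -/
theorem rough_estimate_from_random_simplifications {X : Type*} [MetricSpace X] [Inhabited X]
    (T : Finset (List X)) (hT : T.Nonempty) (n m ℓ : ℕ) (hn : T.card = n)
    (hm : ∀ τ ∈ T, 2 ≤ τ.length ∧ τ.length ≤ m)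
    (hℓ2 : 2 ≤ ℓ) (hℓm : ℓ ≤ m)
    (p : ℝ) (hp : 1 ≤ p) (δ : ℝ) (hδ0 : 0 < δ) (hδ1 : δ < 1)
    (simp : List X → List X)
    (hsimp : ∀ τ ∈ T, SeqLE ℓ (simp τ) ∧
      ∀ π' : List X, SeqLE ℓ π' → dtw p τ (simp τ) ≤ 2 * dtw p τ π')
    (c : List X) (hc : SeqLE ℓ c)
    (hcopt : ∀ c' : List X, SeqLE ℓ c' → dtwCost p 1 T c ≤ dtwCost p 1 T c') :
    (1 - δ / 2) *
        (Fintype.card (Fin ⌈Real.logb 2 (2 / δ)⌉₊ → {τ // τ ∈ T}) : ℝ) ≤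
      (Nat.card {s : Fin ⌈Real.logb 2 (2 / δ)⌉₊ → {τ // τ ∈ T} |
          ∃ i, dtwCost p 1 T (simp ((s i : List X))) ≤
            8 * (m : ℝ) ^ (1 / p) * (ℓ : ℝ) ^ (1 / p) * dtwCost p 1 T c} : ℝ) := by
  classical
  set N : ℕ := ⌈Real.logb 2 (2 / δ)⌉₊ with hN
  set C : ℝ := ∑ σ ∈ T, dtw p c σ with hCdef
  set P : List X → Prop := fun τ => (T.card : ℝ) * dtw p c τ ≤ 2 * C with hPdef
  have hQgood : ∀ τ ∈ T, P τ →
      dtwCost p 1 T (simp τ) ≤ 8 * (m : ℝ) ^ (1 / p) * (ℓ : ℝ) ^ (1 / p) * dtwCost p 1 T c :=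
    fun τ hτ hPτ => DTWAux.good_center T m ℓ hm hℓ2 p hp simp hsimp c hc τ hτ hPτ
  have hmarkov : T.card ≤ 2 * (T.filter P).card := by
    apply DTWAux.markov T (fun τ => dtw p c τ) (fun τ _ => DTWAux.dtw_nonneg p _ _) C le_rfl P
    intro a _ hnP
    exact not_le.mp hnP
  set badA : Finset {τ // τ ∈ T} := Finset.univ.filter (fun a => ¬ P ↑a) with hbadA
  have hbadA_card : 2 * badA.card ≤ T.card := by
    have h1 : badA.card = (T.filter fun τ => ¬ P τ).card := by
      have hfa := Finset.filter_attach (fun τ => ¬ P τ) T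
      rw [hbadA, ← Finset.attach_eq_univ, hfa, Finset.card_map, Finset.card_attach]
    have h2 := Finset.card_filter_add_card_filter_not (s := T) (p := P)
    omega
  set Q : (Fin N → {τ // τ ∈ T}) → Prop := fun s =>
    ∃ i, dtwCost p 1 T (simp ((s i : List X))) ≤
      8 * (m : ℝ) ^ (1 / p) * (ℓ : ℝ) ^ (1 / p) * dtwCost p 1 T c with hQ
  have hseteq : {s : Fin N → {τ // τ ∈ T} | Q s} = ↑(Finset.univ.filter Q) := by
    ext s; simp
  rw [Nat.card_coe_set_eq, hseteq, Set.ncard_coe_finset]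
  have hcard_fun : Fintype.card (Fin N → {τ // τ ∈ T}) = T.card ^ N := by
    rw [Fintype.card_fun, Fintype.card_coe, Fintype.card_fin]
  have hsplitQ := Finset.card_filter_add_card_filter_not
    (s := (Finset.univ : Finset (Fin N → {τ // τ ∈ T}))) (p := Q)
  rw [Finset.card_univ, hcard_fun] at hsplitQ
  have hbadfun : (Finset.univ.filter fun s => ¬ Q s) ⊆
      Fintype.piFinset (fun _ : Fin N => badA) := by
    intro s hs
    rw [Finset.mem_filter] at hs
    rw [Fintype.mem_piFinset]
    intro i
    rw [hbadA, Finset.mem_filter]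
    refine ⟨Finset.mem_univ _, fun hPa => ?_⟩
    exact hs.2 ⟨i, hQgood ↑(s i) (s i).2 hPa⟩
  have hbadfun_card : (Finset.univ.filter fun s => ¬ Q s).card ≤ badA.card ^ N := by
    refine le_trans (Finset.card_le_card hbadfun) (le_of_eq ?_)
    rw [Fintype.card_piFinset]
    simp
  -- numeric part
  have h2N : (2 : ℝ) / δ ≤ (2 : ℝ) ^ N := by
    have hlogb : Real.logb 2 (2 / δ) ≤ (N : ℝ) := Nat.le_ceil _
    calc (2 : ℝ) / δ = (2 : ℝ) ^ Real.logb 2 (2 / δ) :=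
          (Real.rpow_logb (by norm_num) (by norm_num) (by positivity)).symm
      _ ≤ (2 : ℝ) ^ (N : ℝ) := Real.rpow_le_rpow_of_exponent_le (by norm_num) hlogb
      _ = (2 : ℝ) ^ N := Real.rpow_natCast 2 N
  have h2Npos : (0 : ℝ) < (2 : ℝ) ^ N := by positivity
  have hhalf : (1 : ℝ) / (2 : ℝ) ^ N ≤ δ / 2 := by
    rw [div_le_div_iff₀ h2Npos (by norm_num)]
    rw [div_le_iff₀ hδ0] at h2N
    linarith
  have hb_half : (badA.card : ℝ) ≤ (T.card : ℝ) / 2 := by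
    have : (2 * badA.card : ℝ) ≤ (T.card : ℝ) := by exact_mod_cast hbadA_card
    linarith
  have hbpow : ((badA.card : ℝ)) ^ N ≤ ((T.card : ℝ) / 2) ^ N :=
    pow_le_pow_left₀ (Nat.cast_nonneg _) hb_half N
  have hdiv : ((T.card : ℝ) / 2) ^ N = (T.card : ℝ) ^ N / (2 : ℝ) ^ N := div_pow _ _ _
  have hfinal : ((badA.card : ℝ)) ^ N ≤ (δ / 2) * (T.card : ℝ) ^ N := by
    rw [hdiv] at hbpow
    have hTn : (0 : ℝ) ≤ (T.card : ℝ) ^ N := by positivity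
    calc ((badA.card : ℝ)) ^ N ≤ (T.card : ℝ) ^ N / (2 : ℝ) ^ N := hbpow
      _ = (T.card : ℝ) ^ N * ((1 : ℝ) / (2 : ℝ) ^ N) := by ring
      _ ≤ (T.card : ℝ) ^ N * (δ / 2) := mul_le_mul_of_nonneg_left hhalf hTn
      _ = (δ / 2) * (T.card : ℝ) ^ N := by ring
  rw [hcard_fun]
  have hc1 : ((Finset.univ.filter Q).card : ℝ) + ((Finset.univ.filter fun s => ¬ Q s).card : ℝ)
      = ((T.card : ℝ)) ^ N := by exact_mod_cast congrArg (Nat.cast (R := ℝ)) hsplitQ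
  have hc2 : ((Finset.univ.filter fun s => ¬ Q s).card : ℝ) ≤ ((badA.card : ℝ)) ^ N := by
    exact_mod_cast hbadfun_card
  push_cast
  linarith [hfinal, hc1, hc2]
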